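/- Let X follow an exponential distribution with rate λ > 0 and define g(λ) = E[1/(1+X)²] = ∫_0^∞ λ e^{−λx}/(1+x)² dx. Then g is differentiable and g'(λ) = (1 + 2/λ) g(λ) − 1. -/

import Mathlib

open Real MeasureTheory

open Set Filter Metric in
theorem exp_inv_sq_deriv (lam : ℝ) (hlam : 0 < lam) :
    HasDerivAt (fun l : ℝ => ∫ x in Set.Ioi (0:ℝ), l * Real.exp (-l * x) / (1 + x)^2)
      ((1 + 2 / lam) * (∫ x in Set.Ioi (0:ℝ), lam * Real.exp (-lam * x) / (1 + x)^2) - 1)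
      lam := by
  have h1x : ∀ x ∈ Ioi (0:ℝ), (0:ℝ) < 1 + x := fun x hx => by
    simp only [mem_Ioi] at hx; linarith
  -- integrability of exp(-b x)/(1+x)^n on Ioi 0
  have hint : ∀ (b : ℝ), 0 < b → ∀ n : ℕ,
      IntegrableOn (fun x : ℝ => Real.exp (-b * x) / (1 + x) ^ n) (Ioi 0) := by
    intro b hb n
    apply Integrable.mono' (exp_neg_integrableOn_Ioi 0 hb)
    · apply ContinuousOn.aestronglyMeasurable _ measurableSet_Ioi
      exact (Real.continuous_exp.comp (continuous_const.mul continuous_id)).continuousOn.div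
        ((continuous_const.add continuous_id).pow n).continuousOn
        (fun x hx => pow_ne_zero n (h1x x hx).ne')
    · rw [ae_restrict_iff' measurableSet_Ioi]
      filter_upwards with x hx
      have h1 := h1x x hx
      have h2 : (1:ℝ) ≤ (1 + x) ^ n := one_le_pow₀ (by have : (0:ℝ) < x := hx; linarith)
      rw [Real.norm_eq_abs, abs_div, abs_of_pos (Real.exp_pos _), abs_of_pos (by positivity)]
      rw [div_le_iff₀ (by positivity)]
      nlinarith [Real.exp_pos (-b * x)]
  set A : ℝ := ∫ x in Ioi (0:ℝ), Real.exp (-lam * x) / (1 + x) ^ 2 with hA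
  set B : ℝ := ∫ x in Ioi (0:ℝ), Real.exp (-lam * x) / (1 + x) ^ 1 with hB
  have hintA := hint lam hlam 2
  have hintB := hint lam hlam 1
  -- integration by parts identity: lam * B + A = 1
  have hIBP : lam * B + A = 1 := by
    have key : ∫ x in Ioi (0:ℝ),
        (lam * (Real.exp (-lam * x) / (1 + x) ^ 1) + Real.exp (-lam * x) / (1 + x) ^ 2)
        = 0 - (-Real.exp (-lam * 0) / (1 + 0)) := by
      apply integral_Ioi_of_hasDerivAt_of_tendsto
        (f := fun x => -Real.exp (-lam * x) / (1 + x))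
      · apply ContinuousWithinAt.div
        · exact ((Real.continuous_exp.comp (continuous_const.mul continuous_id)).neg).continuousWithinAt
        · exact (continuous_const.add continuous_id).continuousWithinAt
        · norm_num
      · intro x hx
        have h1 := h1x x hx
        have hd : HasDerivAt (fun x : ℝ => -Real.exp (-lam * x) / (1 + x))
            ((lam * Real.exp (-lam * x) * (1 + x) - (-Real.exp (-lam * x)) * 1) / ((1 + x) ^ 2)) x := by
          have he : HasDerivAt (fun x : ℝ => -Real.exp (-lam * x)) (lam * Real.exp (-lam * x)) x := by
            have := (Real.hasDerivAt_exp (-lam * x)).comp x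
              ((hasDerivAt_id x).const_mul (-lam))
            exact this.neg.congr_deriv (by ring)
          exact he.div ((hasDerivAt_id x).const_add 1) h1.ne'
        refine hd.congr_deriv ?_
        field_simp
        ring
      · apply Integrable.add ((hintB).const_mul lam) hintA
      · have h1 : Tendsto (fun x : ℝ => -Real.exp (-lam * x)) atTop (nhds 0) := by
          have hb : Tendsto (fun x : ℝ => -lam * x) atTop atBot := by
            have := tendsto_neg_atTop_atBot.comp
              (tendsto_id.const_mul_atTop hlam (f := fun x : ℝ => x))
            convert this using 2 with x
            simp [Function.comp]
          simpa using (Real.tendsto_exp_atBot.comp hb).neg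
        have h2 : Tendsto (fun x : ℝ => (1 + x)⁻¹) atTop (nhds 0) := by
          apply Tendsto.inv_tendsto_atTop
          exact tendsto_atTop_add_const_left _ 1 tendsto_id
        have := h1.mul h2
        simp only [zero_mul] at this
        simpa [div_eq_mul_inv] using this
    rw [integral_add ((hintB).const_mul lam) hintA, integral_const_mul _ _, ← hA, ← hB] at key
    norm_num at key
    linarith [key]
  -- differentiation under the integral sign
  have hderiv : HasDerivAt (fun l : ℝ => ∫ x in Set.Ioi (0:ℝ), l * Real.exp (-l * x) / (1 + x)^2)
      (∫ x in Ioi (0:ℝ), (1 - lam * x) * Real.exp (-lam * x) / (1 + x) ^ 2) lam := by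
    have heps : (0:ℝ) < lam / 2 := by linarith
    have main := hasDerivAt_integral_of_dominated_loc_of_deriv_le (μ := volume.restrict (Ioi 0))
      (F := fun l x => l * Real.exp (-l * x) / (1 + x)^2)
      (F' := fun l x => (1 - l * x) * Real.exp (-l * x) / (1 + x) ^ 2)
      (bound := fun x => 3 * Real.exp (-(lam / 4) * x)) (x₀ := lam) (Metric.ball_mem_nhds lam heps)
      ?_ ?_ ?_ ?_ ?_ ?_
    · exact main.2
    · filter_upwards with l
      apply ContinuousOn.aestronglyMeasurable _ measurableSet_Ioi
      exact ((continuous_const.mul (Real.continuous_exp.comp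
        (continuous_const.mul continuous_id))).continuousOn).div
        (((continuous_const.add continuous_id).pow 2).continuousOn)
        (fun x hx => pow_ne_zero 2 (h1x x hx).ne')
    · have : IntegrableOn (fun x : ℝ => lam * (Real.exp (-lam * x) / (1 + x) ^ 2)) (Ioi 0) :=
        hintA.const_mul lam
      apply this.congr_fun _ measurableSet_Ioi
      intro x hx; simp [mul_div_assoc]
    · apply ContinuousOn.aestronglyMeasurable _ measurableSet_Ioi
      exact (((continuous_const.sub (continuous_const.mul continuous_id)).mul
        (Real.continuous_exp.comp (continuous_const.mul continuous_id))).continuousOn).div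
        (((continuous_const.add continuous_id).pow 2).continuousOn)
        (fun x hx => pow_ne_zero 2 (h1x x hx).ne')
    · rw [ae_restrict_iff' measurableSet_Ioi]
      filter_upwards with x hx l hl
      simp only [mem_Ioi] at hx
      rw [Metric.mem_ball, Real.dist_eq, abs_lt] at hl
      have hl1 : lam / 2 < l := by linarith
      have hl2 : l < 3 * lam / 2 := by linarith
      have hx0 : (0:ℝ) ≤ x := hx.le
      have h1 : (0:ℝ) < 1 + x := by linarith
      have hp : (1:ℝ) ≤ (1 + x) ^ 2 := one_le_pow₀ (by have : (0:ℝ) < x := hx; linarith)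
      rw [Real.norm_eq_abs, abs_div, abs_of_pos (by positivity : (0:ℝ) < (1+x)^2),
        abs_mul, abs_of_pos (Real.exp_pos _)]
      have habs : |1 - l * x| ≤ 1 + l * x := by
        rw [abs_le]; constructor <;> nlinarith
      have key : (1 + l * x) * Real.exp (-l * x) ≤ 3 * Real.exp (-(lam/4) * x) := by
        have e1 : Real.exp (-l * x) = Real.exp (-(l/2) * x) * Real.exp (-(l/2) * x) := by
          rw [← Real.exp_add]; ring_nf
        have e2 : l * x * Real.exp (-(l/2) * x) ≤ 2 := by
          have ht : (l/2 * x) ≤ Real.exp (l/2 * x) := by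
            have := Real.add_one_le_exp (l/2 * x); linarith
          have := mul_le_mul_of_nonneg_right ht (Real.exp_pos (-(l/2) * x)).le
          rw [← Real.exp_add] at this
          simp only [neg_mul] at this ⊢
          rw [add_neg_cancel, Real.exp_zero] at this
          linarith
        have e3 : Real.exp (-(l/2) * x) ≤ 1 := by
          apply Real.exp_le_one_iff.mpr; nlinarith
        have e4 : Real.exp (-(l/2) * x) ≤ Real.exp (-(lam/4) * x) :=
          Real.exp_le_exp.mpr (by nlinarith)
        calc (1 + l * x) * Real.exp (-l * x)
            = (Real.exp (-(l/2)*x) + l * x * Real.exp (-(l/2)*x)) * Real.exp (-(l/2)*x) := by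
              rw [e1]; ring
          _ ≤ 3 * Real.exp (-(l/2) * x) := by
              apply mul_le_mul_of_nonneg_right _ (Real.exp_pos _).le
              linarith
          _ ≤ 3 * Real.exp (-(lam/4) * x) := by linarith
      calc |1 - l * x| * Real.exp (-l * x) / (1 + x) ^ 2
          ≤ |1 - l * x| * Real.exp (-l * x) / 1 := by
            apply div_le_div_of_nonneg_left _ one_pos hp <;> positivity
        _ = |1 - l * x| * Real.exp (-l * x) := by rw [div_one]
        _ ≤ (1 + l * x) * Real.exp (-l * x) :=
            mul_le_mul_of_nonneg_right habs (Real.exp_pos _).le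
        _ ≤ 3 * Real.exp (-(lam/4) * x) := key
    · exact (exp_neg_integrableOn_Ioi 0 (by linarith : (0:ℝ) < lam/4)).const_mul 3
    · filter_upwards with x l _
      have hd : HasDerivAt (fun l : ℝ => l * Real.exp (-l * x))
          ((1 - l * x) * Real.exp (-l * x)) l := by
        have he : HasDerivAt (fun l : ℝ => Real.exp (-l * x)) (-x * Real.exp (-l * x)) l := by
          have := (Real.hasDerivAt_exp (-l * x)).comp l
            (((hasDerivAt_id l).neg).mul_const x)
          simp only [Function.comp_def, neg_mul, id_eq] at this
          exact this.congr_deriv (by ring)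
        have := (hasDerivAt_id l).mul he
        simp only [id_eq] at this
        exact this.congr_deriv (by ring)
      exact hd.div_const _
  -- rewrite the value of the derivative
  have hval : (∫ x in Ioi (0:ℝ), (1 - lam * x) * Real.exp (-lam * x) / (1 + x) ^ 2)
      = (1 + 2 / lam) * (∫ x in Set.Ioi (0:ℝ), lam * Real.exp (-lam * x) / (1 + x)^2) - 1 := by
    have step1 : (∫ x in Ioi (0:ℝ), (1 - lam * x) * Real.exp (-lam * x) / (1 + x) ^ 2)
        = ∫ x in Ioi (0:ℝ), ((1 + lam) * (Real.exp (-lam * x) / (1 + x) ^ 2)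
            - lam * (Real.exp (-lam * x) / (1 + x) ^ 1)) := by
      apply setIntegral_congr_fun measurableSet_Ioi
      intro x hx
      have h1 := h1x x hx
      field_simp
      ring
    have step2 : (∫ x in Set.Ioi (0:ℝ), lam * Real.exp (-lam * x) / (1 + x)^2) = lam * A := by
      rw [hA, ← integral_const_mul _ _]
      apply setIntegral_congr_fun measurableSet_Ioi
      intro x hx; simp [mul_div_assoc]
    rw [step1, integral_sub (hintA.const_mul _) (hintB.const_mul _),
      integral_const_mul _ _, integral_const_mul _ _, ← hA, ← hB, step2]
    have hlam' : lam ≠ 0 := hlam.ne'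
    field_simp
    nlinarith [hIBP]
  rw [← hval]
  exact hderiv
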